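/- Let f_I ∈ L¹(ℝ) ∩ L^∞(ℝ) satisfy (A1) with price p0 ∈ ℝ and transaction cost a > 0, let F_I(x) := Σ_{n=0}^∞ f_I^+(x+na) for x < p0 and F_I(x) := −Σ_{n=0}^∞ f_I^-(x−na) for x > p0, and let F(x,t) := ∫_ℝ G(t,z) F_I(x−z) dz. Then for every fixed t > 0 there exists R > 0 such that F(x,t) < 0 for all x > R and F(x,t) > 0 for all x < −R. -/

import Mathlib

open MeasureTheory

/-- The one-dimensional heat kernel `G(t,x) = (4πt)^{-1/2} exp(−x²/(4t))`. -/
noncomputable def heatKernel (t x : ℝ) : ℝ :=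
  (Real.sqrt (4 * Real.pi * t))⁻¹ * Real.exp (-(x ^ 2) / (4 * t))

namespace HeatSignAux

open Set Filter
open scoped ENNReal Topology


lemma hk_pos {t : ℝ} (ht : 0 < t) (x : ℝ) : 0 < heatKernel t x := by
  have h4 : 0 < 4 * Real.pi * t := by positivity
  have := Real.sqrt_pos.mpr h4
  unfold heatKernel; positivity

lemma hk_le {t : ℝ} (x : ℝ) (ht : 0 < t) :
    heatKernel t x ≤ (Real.sqrt (4 * Real.pi * t))⁻¹ := by
  have h4 : 0 < 4 * Real.pi * t := by positivity
  have h1 : Real.exp (-(x ^ 2) / (4 * t)) ≤ 1 := by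
    rw [Real.exp_le_one_iff]
    have : 0 ≤ x ^ 2 / (4 * t) := by positivity
    rw [neg_div]; linarith
  have h2 : (0:ℝ) < (Real.sqrt (4 * Real.pi * t))⁻¹ := by
    have := Real.sqrt_pos.mpr h4; positivity
  calc heatKernel t x = (Real.sqrt (4 * Real.pi * t))⁻¹ * Real.exp (-(x ^ 2) / (4 * t)) := rfl
    _ ≤ (Real.sqrt (4 * Real.pi * t))⁻¹ * 1 := by
        exact mul_le_mul_of_nonneg_left h1 h2.le
    _ = _ := mul_one _

lemma hk_even (t x : ℝ) : heatKernel t (-x) = heatKernel t x := by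
  unfold heatKernel; rw [neg_pow]; norm_num

lemma hk_cont (t : ℝ) : Continuous (heatKernel t) := by
  unfold heatKernel
  exact continuous_const.mul (((continuous_pow 2).neg.div_const _).rexp)

lemma hk_integrable {t : ℝ} (ht : 0 < t) : Integrable (heatKernel t) := by
  have hb : 0 < 1/(4*t) := by positivity
  have h := (integrable_exp_neg_mul_sq hb).const_mul (Real.sqrt (4 * Real.pi * t))⁻¹
  refine h.congr ?_
  filter_upwards with z
  unfold heatKernel; ring_nf

lemma hk_abs_integrable {t : ℝ} (ht : 0 < t) :
    Integrable (fun z : ℝ => |z| * heatKernel t z) := by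
  have hb : 0 < 1/(4*t) := by positivity
  have h := ((integrable_mul_exp_neg_mul_sq hb).abs).const_mul (Real.sqrt (4 * Real.pi * t))⁻¹
  refine h.congr ?_
  filter_upwards with z
  rw [abs_mul, abs_of_nonneg (Real.exp_pos _).le]
  unfold heatKernel; ring_nf

lemma hk_linear_integrable {t : ℝ} (ht : 0 < t) (C D : ℝ) :
    Integrable (fun z : ℝ => heatKernel t z * (C + D * |z|)) := by
  have h := ((hk_integrable ht).const_mul C).add ((hk_abs_integrable ht).const_mul D)
  refine h.congr ?_
  filter_upwards with z
  simp only [Pi.add_apply]; ring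

lemma hk_affine_integrable {t : ℝ} (ht : 0 < t) (C D : ℝ) :
    Integrable (fun z : ℝ => heatKernel t z * (C + D * z)) := by
  refine (hk_linear_integrable ht |C| |D|).mono' ?_ ?_
  · exact ((hk_cont t).aestronglyMeasurable.mul
      (aestronglyMeasurable_const.add (aestronglyMeasurable_id.const_mul D)))
  · filter_upwards with z
    have h0 : 0 < heatKernel t z := hk_pos ht z
    rw [Real.norm_eq_abs, abs_mul, abs_of_pos h0]
    refine mul_le_mul_of_nonneg_left ?_ h0.le
    calc |C + D * z| ≤ |C| + |D * z| := abs_add_le _ _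
      _ = |C| + |D| * |z| := by rw [abs_mul]

lemma hk_lower {t a : ℝ} (ht : 0 < t) {z : ℝ} (hz : |z| ≤ a) :
    (Real.sqrt (4 * Real.pi * t))⁻¹ * Real.exp (-(a ^ 2) / (4 * t)) ≤ heatKernel t z := by
  have h4 : 0 < 4 * Real.pi * t := by positivity
  have h2 : (0:ℝ) < (Real.sqrt (4 * Real.pi * t))⁻¹ := by
    have := Real.sqrt_pos.mpr h4; positivity
  unfold heatKernel
  refine mul_le_mul_of_nonneg_left ?_ h2.le
  apply Real.exp_le_exp.mpr
  have hz2 : z ^ 2 ≤ a ^ 2 := by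
    have := sq_abs z ▸ pow_le_pow_left₀ (abs_nonneg z) hz 2
    simpa [sq_abs] using this
  rw [neg_div, neg_div, neg_le_neg_iff]
  exact div_le_div_of_nonneg_right hz2 (by positivity) |>.trans_eq rfl


variable {f_I : ℝ → ℝ} {B p0 a : ℝ}

lemma B_nonneg (hB : ∀ x : ℝ, |f_I x| ≤ B) : 0 ≤ B :=
  le_trans (abs_nonneg _) (hB 0)

lemma negpart_vanish (ha : 0 < a) (hA1_zero : f_I p0 = 0)
    (hA1_pos : ∀ x : ℝ, x < p0 → 0 < f_I x) {x : ℝ} {n : ℕ}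
    (hn : x - p0 ≤ n * a) : max (-f_I (x - n * a)) 0 = 0 := by
  have h2 : x - n*a ≤ p0 := by linarith
  have h3 : 0 ≤ f_I (x - n*a) := by
    rcases lt_or_eq_of_le h2 with h | h
    · exact (hA1_pos _ h).le
    · rw [h, hA1_zero]
  exact max_eq_right (neg_nonpos.mpr h3)

lemma pospart_vanish (ha : 0 < a) (hA1_zero : f_I p0 = 0)
    (hA1_neg : ∀ x : ℝ, p0 < x → f_I x < 0) {x : ℝ} {n : ℕ}
    (hn : p0 - x ≤ n * a) : max (f_I (x + n * a)) 0 = 0 := by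
  have h2 : p0 ≤ x + n*a := by linarith
  have h3 : f_I (x + n*a) ≤ 0 := by
    rcases lt_or_eq_of_le h2 with h | h
    · exact (hA1_neg _ h).le
    · rw [← h, hA1_zero]
  exact max_eq_right h3

lemma summable_negpart (ha : 0 < a) (hA1_zero : f_I p0 = 0)
    (hA1_pos : ∀ x : ℝ, x < p0 → 0 < f_I x) (x : ℝ) :
    Summable (fun n : ℕ => max (-f_I (x - n * a)) 0) := by
  apply summable_of_ne_finset_zero (s := Finset.range (Nat.ceil ((x - p0)/a)))
  intro n hn
  simp only [Finset.mem_range, not_lt] at hn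
  refine negpart_vanish ha hA1_zero hA1_pos ?_
  have h1 : (x - p0)/a ≤ (n:ℝ) := le_trans (Nat.le_ceil _) (by exact_mod_cast hn)
  rw [div_le_iff₀ ha] at h1; linarith

lemma summable_pospart (ha : 0 < a) (hA1_zero : f_I p0 = 0)
    (hA1_neg : ∀ x : ℝ, p0 < x → f_I x < 0) (x : ℝ) :
    Summable (fun n : ℕ => max (f_I (x + n * a)) 0) := by
  apply summable_of_ne_finset_zero (s := Finset.range (Nat.ceil ((p0 - x)/a)))
  intro n hn
  simp only [Finset.mem_range, not_lt] at hn
  refine pospart_vanish ha hA1_zero hA1_neg ?_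
  have h1 : (p0 - x)/a ≤ (n:ℝ) := le_trans (Nat.le_ceil _) (by exact_mod_cast hn)
  rw [div_le_iff₀ ha] at h1; linarith

lemma tsum_pospart_le (hB : ∀ x : ℝ, |f_I x| ≤ B) (ha : 0 < a) (hA1_zero : f_I p0 = 0)
    (hA1_neg : ∀ x : ℝ, p0 < x → f_I x < 0) {x : ℝ} (hx : x < p0) :
    ∑' n : ℕ, max (f_I (x + n * a)) 0 ≤ B * (1 + (p0 - x)/a) := by
  have hB0 : 0 ≤ B := B_nonneg hB
  set N : ℕ := Nat.floor ((p0 - x)/a) + 1 with hN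
  have hvan : ∀ n ∉ Finset.range N, max (f_I (x + n * a)) 0 = 0 := by
    intro n hn
    simp only [Finset.mem_range, not_lt] at hn
    refine pospart_vanish ha hA1_zero hA1_neg ?_
    have h1 : (p0 - x)/a ≤ (n:ℝ) := by
      have h2 : ((p0 - x)/a) < (N:ℝ) := by
        rw [hN]; push_cast
        exact Nat.lt_floor_add_one _
      have : (N:ℝ) ≤ n := by exact_mod_cast hn
      linarith
    rw [div_le_iff₀ ha] at h1; linarith
  rw [tsum_eq_sum hvan]
  have hterm : ∀ n ∈ Finset.range N, max (f_I (x + n * a)) 0 ≤ B := by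
    intro n _
    exact max_le (le_trans (le_abs_self _) (hB _)) hB0
  calc ∑ n ∈ Finset.range N, max (f_I (x + n * a)) 0 ≤ ∑ _n ∈ Finset.range N, B :=
        Finset.sum_le_sum hterm
    _ = (N:ℝ) * B := by rw [Finset.sum_const, Finset.card_range, nsmul_eq_mul]
    _ ≤ ((p0 - x)/a + 1) * B := by
        refine mul_le_mul_of_nonneg_right ?_ hB0
        rw [hN]; push_cast
        have := Nat.floor_le (show 0 ≤ (p0 - x)/a from div_nonneg (by linarith) ha.le)
        linarith
    _ = B * (1 + (p0 - x)/a) := by ring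

lemma tsum_negpart_le (hB : ∀ x : ℝ, |f_I x| ≤ B) (ha : 0 < a) (hA1_zero : f_I p0 = 0)
    (hA1_pos : ∀ x : ℝ, x < p0 → 0 < f_I x) {x : ℝ} (hx : p0 < x) :
    ∑' n : ℕ, max (-f_I (x - n * a)) 0 ≤ B * (1 + (x - p0)/a) := by
  have hB0 : 0 ≤ B := B_nonneg hB
  set N : ℕ := Nat.floor ((x - p0)/a) + 1 with hN
  have hvan : ∀ n ∉ Finset.range N, max (-f_I (x - n * a)) 0 = 0 := by
    intro n hn
    simp only [Finset.mem_range, not_lt] at hn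
    refine negpart_vanish ha hA1_zero hA1_pos ?_
    have h1 : (x - p0)/a ≤ (n:ℝ) := by
      have h2 : ((x - p0)/a) < (N:ℝ) := by
        rw [hN]; push_cast
        exact Nat.lt_floor_add_one _
      have : (N:ℝ) ≤ n := by exact_mod_cast hn
      linarith
    rw [div_le_iff₀ ha] at h1; linarith
  rw [tsum_eq_sum hvan]
  have hterm : ∀ n ∈ Finset.range N, max (-f_I (x - n * a)) 0 ≤ B := by
    intro n _
    refine max_le (le_trans (neg_le_abs _) (hB _)) hB0
  calc ∑ n ∈ Finset.range N, max (-f_I (x - n * a)) 0 ≤ ∑ _n ∈ Finset.range N, B :=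
        Finset.sum_le_sum hterm
    _ = (N:ℝ) * B := by rw [Finset.sum_const, Finset.card_range, nsmul_eq_mul]
    _ ≤ ((x - p0)/a + 1) * B := by
        refine mul_le_mul_of_nonneg_right ?_ hB0
        rw [hN]; push_cast
        have := Nat.floor_le (show 0 ≤ (x - p0)/a from div_nonneg (by linarith) ha.le)
        linarith
    _ = B * (1 + (x - p0)/a) := by ring



variable {F_I : ℝ → ℝ}

lemma FI_nonpos (ha : 0 < a)
    (hFI_gt : ∀ x : ℝ, p0 < x → F_I x = -∑' n : ℕ, max (-f_I (x - n * a)) 0)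
    {x : ℝ} (hx : p0 < x) : F_I x ≤ 0 := by
  rw [hFI_gt x hx]
  exact neg_nonpos.mpr (tsum_nonneg fun n => le_max_right _ _)

lemma FI_le_term (ha : 0 < a) (hA1_zero : f_I p0 = 0)
    (hA1_pos : ∀ x : ℝ, x < p0 → 0 < f_I x)
    (hFI_gt : ∀ x : ℝ, p0 < x → F_I x = -∑' n : ℕ, max (-f_I (x - n * a)) 0)
    {x : ℝ} (hx : p0 < x) (n : ℕ) :
    F_I x ≤ -max (-f_I (x - n * a)) 0 := by
  rw [hFI_gt x hx]
  refine neg_le_neg ?_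
  exact Summable.le_tsum (summable_negpart ha hA1_zero hA1_pos x) n
    (fun m _ => le_max_right _ _)

lemma FI_le_pos_bound (hB : ∀ x : ℝ, |f_I x| ≤ B) (ha : 0 < a) (hA1_zero : f_I p0 = 0)
    (hA1_neg : ∀ x : ℝ, p0 < x → f_I x < 0)
    (hFI_lt : ∀ x : ℝ, x < p0 → F_I x = ∑' n : ℕ, max (f_I (x + n * a)) 0)
    {x : ℝ} (hx : x < p0) : F_I x ≤ B * (1 + (p0 - x)/a) := by
  rw [hFI_lt x hx]
  exact tsum_pospart_le hB ha hA1_zero hA1_neg hx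

lemma FI_abs_bound (hB : ∀ x : ℝ, |f_I x| ≤ B) (ha : 0 < a) (hA1_zero : f_I p0 = 0)
    (hA1_pos : ∀ x : ℝ, x < p0 → 0 < f_I x)
    (hA1_neg : ∀ x : ℝ, p0 < x → f_I x < 0)
    (hFI_lt : ∀ x : ℝ, x < p0 → F_I x = ∑' n : ℕ, max (f_I (x + n * a)) 0)
    (hFI_gt : ∀ x : ℝ, p0 < x → F_I x = -∑' n : ℕ, max (-f_I (x - n * a)) 0)
    {x : ℝ} (hx : x ≠ p0) : |F_I x| ≤ B * (1 + |x - p0|/a) := by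
  rcases lt_or_gt_of_ne hx with h | h
  · rw [hFI_lt x h, abs_of_nonneg (tsum_nonneg fun n => le_max_right _ _),
      abs_of_neg (by linarith : x - p0 < 0)]
    have := tsum_pospart_le hB ha hA1_zero hA1_neg h
    calc ∑' n : ℕ, max (f_I (x + n * a)) 0 ≤ B * (1 + (p0 - x)/a) := this
      _ = B * (1 + -(x - p0)/a) := by ring_nf
  · rw [hFI_gt x h, abs_neg, abs_of_nonneg (tsum_nonneg fun n => le_max_right _ _),
      abs_of_pos (by linarith : 0 < x - p0)]
    exact tsum_negpart_le hB ha hA1_zero hA1_pos h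

lemma FI_aesm (hint : Integrable f_I) (ha : 0 < a) (hA1_zero : f_I p0 = 0)
    (hA1_pos : ∀ x : ℝ, x < p0 → 0 < f_I x)
    (hA1_neg : ∀ x : ℝ, p0 < x → f_I x < 0)
    (hFI_lt : ∀ x : ℝ, x < p0 → F_I x = ∑' n : ℕ, max (f_I (x + n * a)) 0)
    (hFI_gt : ∀ x : ℝ, p0 < x → F_I x = -∑' n : ℕ, max (-f_I (x - n * a)) 0) :
    AEStronglyMeasurable F_I (volume : Measure ℝ) := by
  obtain ⟨f₀, hf₀sm, hf₀ae⟩ := hint.aestronglyMeasurable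
  have hf₀m : Measurable f₀ := hf₀sm.measurable
  set h : ℝ → ℝ := fun x => if x < p0
      then (∑' n : ℕ, ENNReal.ofReal (max (f₀ (x + n * a)) 0)).toReal
      else -(∑' n : ℕ, ENNReal.ofReal (max (-f₀ (x - n * a)) 0)).toReal with hdef
  have hsm : StronglyMeasurable h := by
    apply Measurable.stronglyMeasurable
    have m1 : Measurable fun x : ℝ => (∑' n : ℕ, ENNReal.ofReal (max (f₀ (x + n * a)) 0)).toReal := by
      apply Measurable.ennreal_toReal
      apply Measurable.ennreal_tsum (ι := ℕ)
      intro n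
      exact ((hf₀m.comp (measurable_add_const ((n:ℝ) * a))).max measurable_const).ennreal_ofReal
    have m2 : Measurable fun x : ℝ => -(∑' n : ℕ, ENNReal.ofReal (max (-f₀ (x - n * a)) 0)).toReal := by
      apply Measurable.neg
      apply Measurable.ennreal_toReal
      apply Measurable.ennreal_tsum (ι := ℕ)
      intro n
      exact (((hf₀m.comp (measurable_sub_const ((n:ℝ) * a))).neg).max measurable_const).ennreal_ofReal
    exact Measurable.ite (measurableSet_lt measurable_id measurable_const) m1 m2
  refine ⟨h, hsm, ?_⟩
  have hall : ∀ᵐ x : ℝ, (∀ n : ℕ, f_I (x + n * a) = f₀ (x + n * a)) ∧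
      (∀ n : ℕ, f_I (x - n * a) = f₀ (x - n * a)) ∧ x ≠ p0 := by
    refine ((ae_all_iff.2 fun n => ?_).and ((ae_all_iff.2 fun n => ?_).and ?_))
    · have := (measurePreserving_add_right (volume : Measure ℝ)
        ((n:ℝ) * a)).quasiMeasurePreserving.ae_eq_comp hf₀ae
      filter_upwards [this] with x hx using hx
    · have := (measurePreserving_add_right (volume : Measure ℝ)
        (-((n:ℝ) * a))).quasiMeasurePreserving.ae_eq_comp hf₀ae
      filter_upwards [this] with x hx
      simpa [Function.comp, sub_eq_add_neg] using hx
    · have hs : {x : ℝ | ¬ x ≠ p0} = {p0} := by ext y; simp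
      rw [ae_iff, hs]
      exact measure_singleton p0
  filter_upwards [hall] with x hx
  obtain ⟨h1, h2, h3⟩ := hx
  rcases lt_trichotomy x p0 with hlt | heq | hgt
  · rw [hFI_lt x hlt, hdef]
    simp only [if_pos hlt]
    set N : ℕ := Nat.ceil ((p0 - x)/a) with hN
    have hvr : ∀ n : ℕ, N ≤ n → p0 - x ≤ n * a := by
      intro n hn
      have h1' : (p0 - x)/a ≤ (n:ℝ) := le_trans (Nat.le_ceil _) (by exact_mod_cast hn)
      rw [div_le_iff₀ ha] at h1'; linarith
    have hvanI : ∀ n ∉ Finset.range N, max (f_I (x + n * a)) 0 = 0 := fun n hn =>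
      pospart_vanish ha hA1_zero hA1_neg (hvr n (by simpa [Finset.mem_range, not_lt] using hn))
    have hvan0 : ∀ n ∉ Finset.range N,
        ENNReal.ofReal (max (f₀ (x + n * a)) 0) = 0 := by
      intro n hn
      rw [← h1 n, hvanI n hn, ENNReal.ofReal_zero]
    rw [tsum_eq_sum hvanI, tsum_eq_sum hvan0, ENNReal.toReal_sum (fun n _ => ENNReal.ofReal_ne_top)]
    refine Finset.sum_congr rfl fun n _ => ?_
    rw [ENNReal.toReal_ofReal (le_max_right _ _), h1 n]
  · exact absurd heq h3
  · rw [hFI_gt x hgt, hdef]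
    simp only [if_neg (not_lt.mpr hgt.le)]
    set N : ℕ := Nat.ceil ((x - p0)/a) with hN
    have hvr : ∀ n : ℕ, N ≤ n → x - p0 ≤ n * a := by
      intro n hn
      have h1' : (x - p0)/a ≤ (n:ℝ) := le_trans (Nat.le_ceil _) (by exact_mod_cast hn)
      rw [div_le_iff₀ ha] at h1'; linarith
    have hvanI : ∀ n ∉ Finset.range N, max (-f_I (x - n * a)) 0 = 0 := fun n hn =>
      negpart_vanish ha hA1_zero hA1_pos (hvr n (by simpa [Finset.mem_range, not_lt] using hn))
    have hvan0 : ∀ n ∉ Finset.range N,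
        ENNReal.ofReal (max (-f₀ (x - n * a)) 0) = 0 := by
      intro n hn
      rw [← h2 n, hvanI n hn, ENNReal.ofReal_zero]
    rw [tsum_eq_sum hvanI, tsum_eq_sum hvan0, ENNReal.toReal_sum (fun n _ => ENNReal.ofReal_ne_top)]
    congr 1
    refine Finset.sum_congr rfl fun n _ => ?_
    rw [ENNReal.toReal_ofReal (le_max_right _ _), h2 n]


lemma aux_right (f_I : ℝ → ℝ) (hint : Integrable f_I) (B : ℝ) (hB : ∀ x : ℝ, |f_I x| ≤ B)
    (p0 a : ℝ) (ha : 0 < a)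
    (hA1_zero : f_I p0 = 0)
    (hA1_pos : ∀ x : ℝ, x < p0 → 0 < f_I x)
    (hA1_neg : ∀ x : ℝ, p0 < x → f_I x < 0)
    (F_I : ℝ → ℝ)
    (hFI_lt : ∀ x : ℝ, x < p0 → F_I x = ∑' n : ℕ, max (f_I (x + n * a)) 0)
    (hFI_gt : ∀ x : ℝ, p0 < x → F_I x = -∑' n : ℕ, max (-f_I (x - n * a)) 0)
    (F : ℝ → ℝ → ℝ)
    (hF : ∀ x t : ℝ, F x t = ∫ z : ℝ, heatKernel t z * F_I (x - z))
    (t : ℝ) (ht : 0 < t) :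
    ∃ R : ℝ, 0 < R ∧ ∀ x : ℝ, R < x → F x t < 0 := by
  have hB0 : 0 ≤ B := B_nonneg hB
  set c₁ : ℝ := (Real.sqrt (4 * Real.pi * t))⁻¹ with hc₁def
  have hc₁ : 0 < c₁ := by
    have h4 : 0 < 4 * Real.pi * t := by positivity
    have := Real.sqrt_pos.mpr h4
    rw [hc₁def]; positivity
  set c₀ : ℝ := c₁ * Real.exp (-(a^2)/(4*t)) with hc₀def
  have hc₀ : 0 < c₀ := by rw [hc₀def]; positivity
  set q : ℝ → ℝ := fun y => max (-f_I y) 0 with hqdef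
  have hq0 : ∀ y, 0 ≤ q y := fun y => le_max_right _ _
  have hqB : ∀ y, q y ≤ B := fun y => max_le (le_trans (neg_le_abs _) (hB y)) hB0
  have hq_int : Integrable q := hint.neg_part
  set m : ℝ := ∫ y in Icc (p0+1) (p0+1+a), q y with hmdef
  have hm : 0 < m := by
    rw [hmdef]
    refine (setIntegral_pos_iff_support_of_nonneg_ae ?_ ?_).mpr ?_
    · exact ae_of_all _ fun y => hq0 y
    · exact hq_int.integrableOn
    · have hsub : Icc (p0+1) (p0+1+a) ⊆ Function.support q ∩ Icc (p0+1) (p0+1+a) := by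
        intro y hy
        refine ⟨?_, hy⟩
        have hy1 : p0 < y := by have := hy.1; linarith
        have hneg := hA1_neg y hy1
        have : q y = -f_I y := max_eq_left (by linarith)
        simp only [Function.mem_support, this]
        intro hcon; linarith
      calc (0:ℝ≥0∞) < ENNReal.ofReal a := by simp [ha]
        _ = volume (Icc (p0+1) (p0+1+a)) := by rw [Real.volume_Icc]; congr 1; ring
        _ ≤ _ := measure_mono hsub
  set δ : ℝ := c₀ * m with hδdef
  have hδ : 0 < δ := mul_pos hc₀ hm
  have hFIsm : AEStronglyMeasurable F_I volume :=
    FI_aesm hint ha hA1_zero hA1_pos hA1_neg hFI_lt hFI_gt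
  have hInt : ∀ x : ℝ, Integrable (fun z => heatKernel t z * F_I (x - z)) := by
    intro x
    have hcomp0 : AEStronglyMeasurable (F_I ∘ (fun z : ℝ => x - z)) volume :=
      hFIsm.comp_quasiMeasurePreserving
        (Measure.measurePreserving_sub_left volume x).quasiMeasurePreserving
    have hcomp : AEStronglyMeasurable (fun z : ℝ => F_I (x - z)) volume := hcomp0
    refine (hk_linear_integrable ht (B*(1+|x - p0|/a)) (B/a)).mono'
      ((hk_cont t).aestronglyMeasurable.mul hcomp) ?_
    have hne : ∀ᵐ z : ℝ, z ≠ x - p0 := by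
      rw [ae_iff]
      have hset : {z : ℝ | ¬ z ≠ x - p0} = {x - p0} := by ext y; simp
      rw [hset]; exact measure_singleton _
    filter_upwards [hne] with z hz
    have hxz : x - z ≠ p0 := by intro hcon; apply hz; linarith
    have habs := FI_abs_bound hB ha hA1_zero hA1_pos hA1_neg hFI_lt hFI_gt hxz
    have h0 : 0 < heatKernel t z := hk_pos ht z
    rw [Real.norm_eq_abs, abs_mul, abs_of_pos h0]
    refine mul_le_mul_of_nonneg_left ?_ h0.le
    refine le_trans habs ?_
    have htri : |x - z - p0| ≤ |x - p0| + |z| := by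
      rw [show x - z - p0 = (x - p0) + -z by ring]
      exact le_trans (abs_add_le _ _) (by rw [abs_neg])
    have h3 : B * (1 + |x - z - p0|/a) ≤ B * (1 + (|x - p0| + |z|)/a) := by gcongr
    have h4 : B * (1 + (|x - p0| + |z|)/a) = B*(1+|x - p0|/a) + (B/a)*|z| := by
      field_simp; ring
    linarith
  -- tail bound tends to zero
  have htail : Tendsto (fun s : ℝ => ∫ z in Ioi s, heatKernel t z * (B*(1+(z-s)/a)))
      atTop (𝓝 0) := by
    have hkey : Tendsto (fun s : ℝ => ∫ z : ℝ,
        (Ioi s).indicator (fun z => heatKernel t z * (B*(1+(z-s)/a))) z) atTop (𝓝 0) := by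
      have h0 : (0:ℝ) = ∫ _z : ℝ, (0:ℝ) := by rw [integral_zero]
      rw [h0]
      apply tendsto_integral_filter_of_dominated_convergence
        (bound := fun z : ℝ => heatKernel t z * (B*(1+|z|/a)))
      · filter_upwards with s
        refine AEStronglyMeasurable.indicator ?_ measurableSet_Ioi
        exact ((hk_cont t).mul (continuous_const.mul (continuous_const.add
          ((continuous_id.sub continuous_const).div_const a)))).aestronglyMeasurable
      · filter_upwards [eventually_ge_atTop (0:ℝ)] with s hs
        filter_upwards with z
        by_cases hzs : z ∈ Ioi s
        · rw [indicator_of_mem hzs]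
          have hz0 : s < z := mem_Ioi.mp hzs
          have h0' : 0 < heatKernel t z := hk_pos ht z
          rw [Real.norm_eq_abs, abs_mul, abs_of_pos h0']
          refine mul_le_mul_of_nonneg_left ?_ h0'.le
          have h1 : 0 ≤ z - s := by linarith
          have h2 : z - s ≤ |z| := le_trans (by linarith) (le_abs_self z)
          have h5 : 0 ≤ B*(1+(z-s)/a) :=
            mul_nonneg hB0 (by positivity)
          rw [abs_of_nonneg h5]
          gcongr
        · rw [indicator_of_notMem hzs, norm_zero]
          have h0' : 0 < heatKernel t z := hk_pos ht z
          positivity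
      · refine (hk_linear_integrable ht B (B/a)).congr ?_
        filter_upwards with z; ring_nf
      · filter_upwards with z
        refine tendsto_const_nhds.congr' ?_
        filter_upwards [eventually_gt_atTop z] with s hs
        rw [indicator_of_notMem (by simp only [mem_Ioi, not_lt]; linarith)]
    refine (hkey.congr fun s => ?_)
    rw [integral_indicator measurableSet_Ioi]
  have hev : ∀ᶠ s in atTop, (∫ z in Ioi s, heatKernel t z * (B*(1+(z-s)/a))) < δ :=
    htail.eventually (gt_mem_nhds hδ)
  rw [eventually_atTop] at hev
  obtain ⟨s₀, hs₀⟩ := hev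
  refine ⟨1 + |p0| + 2*a + max s₀ 0, by positivity, fun x hx => ?_⟩
  set s : ℝ := x - p0 with hsdef
  have hs1 : 1 + 2*a + max s₀ 0 < s := by
    have := le_abs_self p0; rw [hsdef]; linarith
  have hmax0 : (0:ℝ) ≤ max s₀ 0 := le_max_right _ _
  have hmax1 : s₀ ≤ max s₀ 0 := le_max_left _ _
  have hss0 : s₀ ≤ s := by linarith
  have hsa : a < s := by linarith
  set κ : ℝ := s - 1 with hκdef
  have hκ : 2*a < κ := by rw [hκdef]; linarith
  set n₀ : ℕ := Nat.floor (κ / a) with hn₀def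
  have hn₀1 : (n₀:ℝ) * a ≤ κ := by
    have h := Nat.floor_le (show 0 ≤ κ/a from div_nonneg (by linarith) ha.le)
    rw [hn₀def]
    calc ((Nat.floor (κ/a) : ℝ)) * a ≤ (κ/a) * a := mul_le_mul_of_nonneg_right h ha.le
      _ = κ := div_mul_cancel₀ κ (ne_of_gt ha)
  have hn₀2 : κ < ((n₀:ℝ) + 1) * a := by
    have h := Nat.lt_floor_add_one (κ/a)
    rw [hn₀def, ← div_lt_iff₀ ha] at *
    push_cast
    push_cast at h
    linarith
  set β : ℝ := κ - n₀ * a with hβdef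
  have hβ0 : 0 ≤ β := by rw [hβdef]; linarith
  have hβa : β < a := by
    have : ((n₀:ℝ)+1)*a = n₀*a + a := by ring
    rw [hβdef]; linarith
  have hIsub : Icc (β - a) β ⊆ Icc (-a) a := Icc_subset_Icc (by linarith) (by linarith)
  have hIiic : Icc (β - a) β ⊆ Iic s := fun z hz => le_trans hz.2 (by linarith)
  have hφint := hInt x
  have hsplit : F x t = (∫ z in Iic s, heatKernel t z * F_I (x - z))
      + ∫ z in Ioi s, heatKernel t z * F_I (x - z) := by
    rw [hF x t]
    exact (intervalIntegral.integral_Iic_add_Ioi hφint.integrableOn hφint.integrableOn).symm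
  have htail_int : Integrable (fun z : ℝ => heatKernel t z * (B*(1+(z-s)/a))) := by
    refine (hk_affine_integrable ht (B - B*s/a) (B/a)).congr ?_
    filter_upwards with z; ring_nf
  have hT2 : (∫ z in Ioi s, heatKernel t z * F_I (x - z))
      ≤ ∫ z in Ioi s, heatKernel t z * (B*(1+(z-s)/a)) := by
    refine setIntegral_mono_on hφint.integrableOn htail_int.integrableOn measurableSet_Ioi ?_
    intro z hz
    have hzs : s < z := mem_Ioi.mp hz
    have hxz : x - z < p0 := by rw [hsdef] at hzs; linarith
    have h1 := FI_le_pos_bound hB ha hA1_zero hA1_neg hFI_lt hxz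
    have h2 : p0 - (x - z) = z - s := by rw [hsdef]; ring
    refine mul_le_mul_of_nonneg_left ?_ (hk_pos ht z).le
    rw [← h2]
    exact h1
  set ψ : ℝ → ℝ := fun z => (Icc (β - a) β).indicator
      (fun w => heatKernel t w * q (x - w - n₀ * a)) z with hψdef
  have hqcomp : AEStronglyMeasurable (fun w : ℝ => q (x - w - n₀*a)) volume := by
    have h : AEStronglyMeasurable (q ∘ (fun w : ℝ => (x - n₀*a) - w)) volume :=
      hq_int.aestronglyMeasurable.comp_quasiMeasurePreserving
        (Measure.measurePreserving_sub_left volume (x - n₀*a)).quasiMeasurePreserving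
    refine h.congr ?_
    filter_upwards with w
    simp only [Function.comp_apply]
    rw [sub_right_comm]
  have hψ_on : IntegrableOn (fun w => heatKernel t w * q (x - w - n₀*a)) (Icc (β - a) β) := by
    refine Integrable.mono' (g := fun _ => c₁ * B)
      ((integrableOn_const_iff).mpr (Or.inr (by rw [Real.volume_Icc]; exact ENNReal.ofReal_lt_top)))
      ((hk_cont t).aestronglyMeasurable.mul hqcomp).restrict ?_
    refine ae_restrict_of_ae ?_
    filter_upwards with w
    rw [Real.norm_eq_abs, abs_mul, abs_of_pos (hk_pos ht w), abs_of_nonneg (hq0 _)]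
    exact mul_le_mul (hk_le w ht) (hqB _) (hq0 _) hc₁.le
  have hψint : Integrable ψ := by
    rw [hψdef]
    rw [integrable_indicator_iff measurableSet_Icc]
    exact hψ_on
  have hmain : (∫ z in Iic s, heatKernel t z * F_I (x - z)) ≤ ∫ z in Iic s, -ψ z := by
    refine setIntegral_mono_ae_restrict hφint.integrableOn hψint.neg.integrableOn ?_
    have hne : ∀ᵐ z : ℝ, z ≠ s := by
      rw [ae_iff]
      have hset : {z : ℝ | ¬ z ≠ s} = {s} := by ext y; simp
      rw [hset]; exact measure_singleton _
    filter_upwards [ae_restrict_mem measurableSet_Iic, ae_restrict_of_ae hne] with z hz hzs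
    have hzlt : z < s := lt_of_le_of_ne hz hzs
    have hxz : p0 < x - z := by rw [hsdef] at hzlt; linarith
    by_cases hzI : z ∈ Icc (β - a) β
    · simp only [hψdef, indicator_of_mem hzI]
      have hterm := FI_le_term ha hA1_zero hA1_pos hFI_gt hxz n₀
      have hmul := mul_le_mul_of_nonneg_left hterm (hk_pos ht z).le
      calc heatKernel t z * F_I (x - z)
          ≤ heatKernel t z * -(max (-f_I (x - z - n₀*a)) 0) := hmul
        _ = -(heatKernel t z * q (x - z - n₀*a)) := by rw [hqdef]; ring
    · simp only [hψdef, indicator_of_notMem hzI, neg_zero]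
      have hfi := FI_nonpos ha hFI_gt hxz
      have := mul_le_mul_of_nonneg_left hfi (hk_pos ht z).le
      simpa using this
  have hψeq : ∫ z in Iic s, ψ z = ∫ z in Icc (β - a) β, heatKernel t z * q (x - z - n₀*a) := by
    rw [hψdef, setIntegral_indicator measurableSet_Icc,
      inter_eq_self_of_subset_right hIiic]
  have hneg : ∫ z in Iic s, -ψ z = -∫ z in Icc (β - a) β, heatKernel t z * q (x - z - n₀*a) := by
    rw [integral_neg, hψeq]
  have hqcomp_int : Integrable (fun z : ℝ => q (x - z - n₀*a)) := by
    have h := ((Measure.measurePreserving_sub_left volume (x - n₀*a)).integrable_comp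
      hq_int.aestronglyMeasurable).mpr hq_int
    refine h.congr ?_
    filter_upwards with w
    simp only [Function.comp_apply]
    rw [sub_right_comm]
  have hlow1 : ∫ z in Icc (β - a) β, c₀ * q (x - z - n₀*a)
      ≤ ∫ z in Icc (β - a) β, heatKernel t z * q (x - z - n₀*a) := by
    refine setIntegral_mono_on (hqcomp_int.const_mul c₀).integrableOn hψ_on measurableSet_Icc ?_
    intro z hz
    refine mul_le_mul_of_nonneg_right ?_ (hq0 _)
    have habs : |z| ≤ a := abs_le.mpr ⟨(hIsub hz).1, (hIsub hz).2⟩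
    exact hk_lower ht habs
  have hCOV : ∫ z in Icc (β - a) β, q (x - z - n₀*a) = m := by
    have h1 : (fun z : ℝ => q (x - z - n₀*a)) = fun z : ℝ => q ((x - n₀*a) - z) := by
      funext z; rw [sub_right_comm]
    rw [h1]
    rw [integral_Icc_eq_integral_Ioc, ← intervalIntegral.integral_of_le (by linarith : β - a ≤ β),
      intervalIntegral.integral_comp_sub_left (fun y => q y) (x - n₀*a)]
    have e1 : x - n₀*a - β = p0 + 1 := by rw [hβdef, hκdef, hsdef]; ring
    have e2 : x - n₀*a - (β - a) = p0 + 1 + a := by rw [hβdef, hκdef, hsdef]; ring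
    rw [e1, e2, intervalIntegral.integral_of_le (by linarith : p0+1 ≤ p0+1+a), hmdef,
      integral_Icc_eq_integral_Ioc]
  have hlow : c₀ * m ≤ ∫ z in Icc (β - a) β, heatKernel t z * q (x - z - n₀*a) := by
    calc c₀ * m = ∫ z in Icc (β - a) β, c₀ * q (x - z - n₀*a) := by
          rw [MeasureTheory.integral_const_mul, hCOV]
      _ ≤ _ := hlow1
  have hfinal : F x t ≤ -(c₀ * m) + ∫ z in Ioi s, heatKernel t z * (B*(1+(z-s)/a)) := by
    rw [hsplit]
    have h5 := le_trans hmain (le_of_eq hneg)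
    linarith
  have h6 := hs₀ s hss0
  rw [hδdef] at h6
  linarith

end HeatSignAux

open HeatSignAux Set Filter in
/-- Let `f_I ∈ L¹ ∩ L^∞` satisfy (A1) with price `p0` and transaction cost `a > 0`, let
`F_I` be the transformed datum (series of translates of `f_I⁺` to the left of `p0`, minus
the series of translates of `f_I⁻` to the right of `p0`), and let `F` be its heat
extension. Then for every `t > 0` there is `R > 0` with `F(x,t) < 0` for `x > R` and
`F(x,t) > 0` for `x < −R`. -/
theorem heat_extension_sign_at_infinity
    (f_I : ℝ → ℝ) (hint : Integrable f_I) (B : ℝ) (hB : ∀ x : ℝ, |f_I x| ≤ B)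
    (p0 a : ℝ) (ha : 0 < a)
    (hA1_zero : f_I p0 = 0)
    (hA1_pos : ∀ x : ℝ, x < p0 → 0 < f_I x)
    (hA1_neg : ∀ x : ℝ, p0 < x → f_I x < 0)
    (F_I : ℝ → ℝ)
    (hFI_lt : ∀ x : ℝ, x < p0 → F_I x = ∑' n : ℕ, max (f_I (x + n * a)) 0)
    (hFI_gt : ∀ x : ℝ, p0 < x → F_I x = -∑' n : ℕ, max (-f_I (x - n * a)) 0)
    (F : ℝ → ℝ → ℝ)
    (hF : ∀ x t : ℝ, F x t = ∫ z : ℝ, heatKernel t z * F_I (x - z)) :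
    ∀ t : ℝ, 0 < t → ∃ R : ℝ, 0 < R ∧
      (∀ x : ℝ, R < x → F x t < 0) ∧ (∀ x : ℝ, x < -R → 0 < F x t) := by
  intro t ht
  obtain ⟨R₁, hR₁pos, hR₁⟩ := aux_right f_I hint B hB p0 a ha hA1_zero hA1_pos hA1_neg
    F_I hFI_lt hFI_gt F hF t ht
  -- reflected data
  set g : ℝ → ℝ := fun x => -f_I (-x) with hgdef
  have hgint : Integrable g := (hint.comp_neg).neg
  have hgB : ∀ x : ℝ, |g x| ≤ B := fun x => by
    rw [hgdef]; simpa [abs_neg] using hB (-x)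
  have hgzero : g (-p0) = 0 := by rw [hgdef]; simp [hA1_zero]
  have hgpos : ∀ x : ℝ, x < -p0 → 0 < g x := fun x hx => by
    rw [hgdef]
    have : p0 < -x := by linarith
    simpa using (hA1_neg _ this)
  have hgneg : ∀ x : ℝ, -p0 < x → g x < 0 := fun x hx => by
    rw [hgdef]
    have : -x < p0 := by linarith
    simpa using (hA1_pos _ this)
  set G_I : ℝ → ℝ := fun x => -F_I (-x) with hGIdef
  have hGI_lt : ∀ x : ℝ, x < -p0 → G_I x = ∑' n : ℕ, max (g (x + n * a)) 0 := by
    intro x hx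
    rw [hGIdef]
    simp only
    rw [hFI_gt (-x) (by linarith), neg_neg]
    refine tsum_congr fun n => ?_
    rw [hgdef]
    simp only
    congr 2
    ring
  have hGI_gt : ∀ x : ℝ, -p0 < x → G_I x = -∑' n : ℕ, max (-g (x - n * a)) 0 := by
    intro x hx
    rw [hGIdef]
    simp only
    rw [hFI_lt (-x) (by linarith)]
    congr 1
    refine tsum_congr fun n => ?_
    rw [hgdef]
    simp only [neg_neg]
    congr 2
    ring
  set G2 : ℝ → ℝ → ℝ := fun x t => -F (-x) t with hG2def
  have hG2F : ∀ x t : ℝ, G2 x t = ∫ z : ℝ, heatKernel t z * G_I (x - z) := by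
    intro x τ
    rw [hG2def]
    simp only
    rw [hF (-x) τ]
    have h1 : -∫ z : ℝ, heatKernel τ z * F_I (-x - z)
        = ∫ z : ℝ, heatKernel τ z * -F_I (-x - z) := by
      rw [← integral_neg]
      congr 1; funext z; ring
    rw [h1]
    have h2 : (∫ z : ℝ, heatKernel τ z * -F_I (-x - z))
        = ∫ z : ℝ, (fun w => heatKernel τ w * -F_I (w - x)) (-z) := by
      congr 1; funext z
      simp only
      rw [hk_even]
      congr 2
      ring
    rw [h2]
    have h3 : (∫ z : ℝ, (fun w => heatKernel τ w * -F_I (w - x)) (-z))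
        = ∫ z : ℝ, heatKernel τ z * -F_I (z - x) :=
      integral_neg_eq_self (fun w => heatKernel τ w * -F_I (w - x)) volume
    rw [h3, hGIdef]
    congr 1; funext z
    simp only
    congr 2
    ring
  obtain ⟨R₂, hR₂pos, hR₂⟩ := aux_right g hgint B hgB (-p0) a ha hgzero hgpos hgneg
    G_I hGI_lt hGI_gt G2 hG2F t ht
  refine ⟨max R₁ R₂, lt_max_of_lt_left hR₁pos, fun x hx => hR₁ x (lt_of_le_of_lt (le_max_left _ _) hx), fun x hx => ?_⟩
  have hx2 : R₂ < -x := by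
    have := le_max_right R₁ R₂
    linarith
  have := hR₂ (-x) hx2
  rw [hG2def] at this
  simp only [neg_neg] at this
  linarith
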